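/- A semidirect product A₇ ⋊ ℤ₂ is isomorphic either to the direct product A₇ × ℤ₂ or to the symmetric group S₇. -/

import Mathlib

set_option maxRecDepth 20000
set_option synthInstance.maxHeartbeats 1000000
set_option synthInstance.maxSize 3000
set_option maxHeartbeats 1000000

open Equiv Equiv.Perm

namespace Stmt11Aux

abbrev P7 := Equiv.Perm (Fin 7)
abbrev A7 := alternatingGroup (Fin 7)

def t3 (a b c : Fin 7) : P7 := Equiv.swap a b * Equiv.swap b c

theorem t3_conj (σ : P7) (a b c : Fin 7) :
    σ * t3 a b c * σ⁻¹ = t3 (σ a) (σ b) (σ c) := by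
  simp only [t3, swap_apply_apply]
  group

theorem t3_inv (a b c : Fin 7) : (t3 a b c)⁻¹ = t3 c b a := by
  simp only [t3, mul_inv_rev, swap_inv]
  rw [swap_comm c b, swap_comm b a]

theorem t3_apply₁ {a b c : Fin 7} (hab : a ≠ b) (hac : a ≠ c) : t3 a b c a = b := by
  simp only [t3, mul_apply]
  rw [swap_apply_of_ne_of_ne hab hac, swap_apply_left]

theorem t3_apply₂ {a b c : Fin 7} (hbc : b ≠ c) (hca : c ≠ a) : t3 a b c b = c := by
  simp only [t3, mul_apply]
  rw [swap_apply_left, swap_apply_of_ne_of_ne hca hbc.symm]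

theorem t3_apply₃ {a b c : Fin 7} : t3 a b c c = a := by
  simp only [t3, mul_apply]
  rw [swap_apply_right, swap_apply_right]

theorem t3_apply_ne {a b c x : Fin 7} (h1 : x ≠ a) (h2 : x ≠ b) (h3 : x ≠ c) :
    t3 a b c x = x := by
  simp only [t3, mul_apply]
  rw [swap_apply_of_ne_of_ne h2 h3, swap_apply_of_ne_of_ne h1 h2]

theorem t3_rot {a b c : Fin 7} (hab : a ≠ b) (hac : a ≠ c) (hbc : b ≠ c) :
    t3 a b c = t3 b c a := by
  have h := t3_conj (t3 a b c) a b c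
  rw [mul_inv_cancel_right] at h
  rwa [t3_apply₁ hab hac, t3_apply₂ hbc hac.symm, t3_apply₃] at h

theorem t3_ne_one {a b c : Fin 7} (hab : a ≠ b) (hac : a ≠ c) : t3 a b c ≠ 1 := by
  intro h
  have h2 : t3 a b c a = a := by rw [h]; rfl
  rw [t3_apply₁ hab hac] at h2
  exact hab h2.symm

theorem t3_sign {a b c : Fin 7} (hab : a ≠ b) (hbc : b ≠ c) : sign (t3 a b c) = 1 := by
  rw [t3, map_mul, sign_swap hab, sign_swap hbc]
  decide

theorem t3_mem {a b c : Fin 7} (hab : a ≠ b) (hbc : b ≠ c) : t3 a b c ∈ A7 :=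
  mem_alternatingGroup.mpr (t3_sign hab hbc)

theorem t3_isThreeCycle {a b c : Fin 7} (hab : a ≠ b) (hac : a ≠ c) (hbc : b ≠ c) :
    IsThreeCycle (t3 a b c) := by
  rw [t3, swap_comm a b]
  exact isThreeCycle_swap_mul_swap_same hab.symm hbc hac

theorem t3_cycleType {a b c : Fin 7} (hab : a ≠ b) (hac : a ≠ c) (hbc : b ≠ c) :
    (t3 a b c).cycleType = {3} :=
  t3_isThreeCycle hab hac hbc

theorem t3_cube {a b c : Fin 7} (hab : a ≠ b) (hac : a ≠ c) (hbc : b ≠ c) :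
    (t3 a b c) ^ 3 = 1 := by
  have h := (t3_isThreeCycle hab hac hbc).orderOf
  rw [← h]
  exact pow_orderOf_eq_one _

theorem t3_support {a b c : Fin 7} (hab : a ≠ b) (hac : a ≠ c) (hbc : b ≠ c) :
    (t3 a b c).support = {a, b, c} := by
  ext x
  simp only [mem_support, Finset.mem_insert, Finset.mem_singleton]
  constructor
  · intro h
    by_contra hx
    push_neg at hx
    exact h (t3_apply_ne hx.1 hx.2.1 hx.2.2)
  · rintro (rfl | rfl | rfl)
    · rw [t3_apply₁ hab hac]; exact hab.symm
    · rw [t3_apply₂ hbc hac.symm]; exact hbc.symm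
    · rw [t3_apply₃]; exact hac

theorem t3_disjoint {a b c d e f : Fin 7} (had : a ≠ d) (hae : a ≠ e) (haf : a ≠ f)
    (hbd : b ≠ d) (hbe : b ≠ e) (hbf : b ≠ f) (hcd : c ≠ d) (hce : c ≠ e) (hcf : c ≠ f) :
    Equiv.Perm.Disjoint (t3 a b c) (t3 d e f) := by
  intro w
  by_cases h1 : w = a ∨ w = b ∨ w = c
  · right
    rcases h1 with rfl | rfl | rfl
    · exact t3_apply_ne had hae haf
    · exact t3_apply_ne hbd hbe hbf
    · exact t3_apply_ne hcd hce hcf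
  · left
    push_neg at h1
    exact t3_apply_ne h1.1 h1.2.1 h1.2.2

theorem eight_distinct {a1 a2 a3 a4 a5 a6 a7 a8 : Fin 7}
    (h12 : a1≠a2) (h13 : a1≠a3) (h14 : a1≠a4) (h15 : a1≠a5) (h16 : a1≠a6) (h17 : a1≠a7) (h18 : a1≠a8)
    (h23 : a2≠a3) (h24 : a2≠a4) (h25 : a2≠a5) (h26 : a2≠a6) (h27 : a2≠a7) (h28 : a2≠a8)
    (h34 : a3≠a4) (h35 : a3≠a5) (h36 : a3≠a6) (h37 : a3≠a7) (h38 : a3≠a8)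
    (h45 : a4≠a5) (h46 : a4≠a6) (h47 : a4≠a7) (h48 : a4≠a8)
    (h56 : a5≠a6) (h57 : a5≠a7) (h58 : a5≠a8)
    (h67 : a6≠a7) (h68 : a6≠a8)
    (h78 : a7≠a8) : False := by
  have hn : ([a1,a2,a3,a4,a5,a6,a7,a8] : List (Fin 7)).Nodup := by
    simp only [List.nodup_cons, List.mem_cons, List.not_mem_nil, or_false, not_or,
      List.nodup_nil, and_true]
    exact ⟨⟨h12,h13,h14,h15,h16,h17,h18⟩, ⟨h23,h24,h25,h26,h27,h28⟩, ⟨h34,h35,h36,h37,h38⟩,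
      ⟨h45,h46,h47,h48⟩, ⟨h56,h57,h58⟩, ⟨h67,h68⟩, ⟨h78, not_false⟩⟩
  have h := hn.length_le_card
  simp at h

theorem support_exists {x : P7} (h1 : x ≠ 1) : ∃ a, x a ≠ a := by
  by_contra h
  push_neg at h
  exact h1 (Equiv.ext h)

theorem cube_decomp {x : P7} (h3 : x ^ 3 = 1) (h1 : x ≠ 1) :
    (∃ a b c : Fin 7, a≠b ∧ a≠c ∧ b≠c ∧ x = t3 a b c) ∨
    (∃ a b c d e f : Fin 7, a≠b ∧ a≠c ∧ b≠c ∧ d≠e ∧ d≠f ∧ e≠f ∧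
      a≠d ∧ a≠e ∧ a≠f ∧ b≠d ∧ b≠e ∧ b≠f ∧ c≠d ∧ c≠e ∧ c≠f ∧
      x = t3 a b c * t3 d e f) := by
  have key : ∀ s, x (x (x s)) = s := by
    intro s
    have h := Equiv.ext_iff.1 h3 s
    simpa [pow_succ, mul_apply] using h
  have hinj := x.injective
  obtain ⟨a, ha⟩ := support_exists h1
  set b := x a with hb
  set c := x b with hc
  have hxc : x c = a := key a
  have hba : b ≠ a := ha
  have hcb : c ≠ b := by
    intro h
    apply hba
    have h2 : x b = x a := by rw [← hc, h, hb]
    exact hinj h2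
  have hca : c ≠ a := by
    intro h
    apply hba
    have h2 : a = b := by rw [← hxc, h, ← hb]
    exact h2.symm
  set y := x * t3 c b a with hy
  have hya : y a = a := by
    rw [hy, mul_apply, t3_apply₃, hxc]
  have hyb : y b = b := by
    rw [hy, mul_apply, t3_apply₂ hba hca.symm, ← hb]
  have hyc : y c = c := by
    rw [hy, mul_apply, t3_apply₁ hcb hca, ← hc]
  have hyo : ∀ w, w ≠ a → w ≠ b → w ≠ c → y w = x w := by
    intro w w1 w2 w3
    rw [hy, mul_apply, t3_apply_ne w3 w2 w1]
  have hxo : ∀ w, w ≠ a → w ≠ b → w ≠ c → (x w ≠ a ∧ x w ≠ b ∧ x w ≠ c) := by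
    intro w w1 w2 w3
    refine ⟨fun h => w3 (hinj (by rw [h, hxc])), fun h => w1 (hinj (by rw [h, ← hb])),
      fun h => w2 (hinj (by rw [h, ← hc]))⟩
  have keyy : ∀ s, y (y (y s)) = s := by
    intro s
    by_cases e1 : s = a
    · rw [e1, hya, hya, hya]
    by_cases e2 : s = b
    · rw [e2, hyb, hyb, hyb]
    by_cases e3 : s = c
    · rw [e3, hyc, hyc, hyc]
    have w1 := hyo s e1 e2 e3
    obtain ⟨n1, n2, n3⟩ := hxo s e1 e2 e3
    have w2 := hyo _ n1 n2 n3
    obtain ⟨m1, m2, m3⟩ := hxo _ n1 n2 n3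
    have w3 := hyo _ m1 m2 m3
    rw [w1, w2, w3, key]
  have hxeq : x = y * t3 a b c := by
    rw [hy, mul_assoc, ← t3_inv, inv_mul_cancel, mul_one]
  by_cases hyone : y = 1
  · left
    exact ⟨a, b, c, hba.symm, hca.symm, hcb.symm, by rw [hxeq, hyone, one_mul]⟩
  · right
    have hyinj := y.injective
    obtain ⟨d, hd⟩ := support_exists hyone
    have hda : d ≠ a := fun h => hd (by rw [h, hya])
    have hdb : d ≠ b := fun h => hd (by rw [h, hyb])
    have hdc : d ≠ c := fun h => hd (by rw [h, hyc])
    set e := y d with he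
    set f := y e with hf'
    have hyf : y f = d := keyy d
    have hed : e ≠ d := hd
    have hfe : f ≠ e := by
      intro h
      apply hed
      have h2 : y e = y d := by rw [← hf', h, he]
      exact hyinj h2
    have hfd : f ≠ d := by
      intro h
      apply hed
      have h2 : d = e := by rw [← hyf, h, ← he]
      exact h2.symm
    have hea : e ≠ a := by rw [he, hyo d hda hdb hdc]; exact (hxo d hda hdb hdc).1
    have heb : e ≠ b := by rw [he, hyo d hda hdb hdc]; exact (hxo d hda hdb hdc).2.1
    have hec : e ≠ c := by rw [he, hyo d hda hdb hdc]; exact (hxo d hda hdb hdc).2.2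
    have hfa : f ≠ a := by rw [hf', hyo e hea heb hec]; exact (hxo e hea heb hec).1
    have hfb : f ≠ b := by rw [hf', hyo e hea heb hec]; exact (hxo e hea heb hec).2.1
    have hfc : f ≠ c := by rw [hf', hyo e hea heb hec]; exact (hxo e hea heb hec).2.2
    have hxd : x d = e := by rw [← hyo d hda hdb hdc, ← he]
    have hxe : x e = f := by rw [← hyo e hea heb hec, ← hf']
    have hxf : x f = d := by rw [← hyo f hfa hfb hfc, hyf]
    have hx2 : x = t3 d e f * t3 a b c := by
      apply Equiv.ext
      intro w
      rw [mul_apply]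
      by_cases w1 : w = a
      · rw [w1, t3_apply₁ hba.symm hca.symm, t3_apply_ne hdb.symm heb.symm hfb.symm, ← hb]
      by_cases w2 : w = b
      · rw [w2, t3_apply₂ hcb.symm hca, t3_apply_ne hdc.symm hec.symm hfc.symm, ← hc]
      by_cases w3 : w = c
      · rw [w3, t3_apply₃, t3_apply_ne hda.symm hea.symm hfa.symm, hxc]
      by_cases w4 : w = d
      · rw [w4, t3_apply_ne hda hdb hdc, t3_apply₁ hed.symm hfd.symm, hxd]
      by_cases w5 : w = e
      · rw [w5, t3_apply_ne hea heb hec, t3_apply₂ hfe.symm hfd, hxe]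
      by_cases w6 : w = f
      · rw [w6, t3_apply_ne hfa hfb hfc, t3_apply₃, hxf]
      · rw [t3_apply_ne w1 w2 w3, t3_apply_ne w4 w5 w6]
        by_contra hxw
        obtain ⟨q1, q2, q3⟩ := hxo w w1 w2 w3
        have q4 : x w ≠ d := fun h => w6 (hinj (h.trans hxf.symm))
        have q5 : x w ≠ e := fun h => w4 (hinj (h.trans hxd.symm))
        have q6 : x w ≠ f := fun h => w5 (hinj (h.trans hxe.symm))
        exact eight_distinct hba.symm hca.symm hda.symm hea.symm hfa.symm
          (fun h => w1 h.symm) (fun h => q1 h.symm)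
          hcb.symm hdb.symm heb.symm hfb.symm (fun h => w2 h.symm) (fun h => q2 h.symm)
          hdc.symm hec.symm hfc.symm (fun h => w3 h.symm) (fun h => q3 h.symm)
          hed.symm hfd.symm (fun h => w4 h.symm) (fun h => q4 h.symm)
          hfe.symm (fun h => w5 h.symm) (fun h => q5 h.symm)
          (fun h => w6 h.symm) (fun h => q6 h.symm)
          (fun h => hxw h.symm)
    exact ⟨d, e, f, a, b, c, hed.symm, hfd.symm, hfe.symm, hba.symm, hca.symm, hcb.symm,
      hda, hdb, hdc, hea, heb, hec, hfa, hfb, hfc, hx2⟩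

theorem invol_decomp {x : P7} (h2 : x ^ 2 = 1) (h1 : x ≠ 1) :
    (∃ a b : Fin 7, a≠b ∧ x = Equiv.swap a b) ∨
    (∃ a b c d : Fin 7, a≠b ∧ a≠c ∧ a≠d ∧ b≠c ∧ b≠d ∧ c≠d ∧ x = Equiv.swap a b * Equiv.swap c d) ∨
    (∃ a b c d e f : Fin 7, a≠b ∧ a≠c ∧ a≠d ∧ a≠e ∧ a≠f ∧ b≠c ∧ b≠d ∧ b≠e ∧ b≠f ∧
      c≠d ∧ c≠e ∧ c≠f ∧ d≠e ∧ d≠f ∧ e≠f ∧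
      x = Equiv.swap a b * Equiv.swap c d * Equiv.swap e f) := by
  have key : ∀ s, x (x s) = s := by
    intro s
    have h := Equiv.ext_iff.1 h2 s
    simpa [pow_succ, mul_apply] using h
  have hinj := x.injective
  obtain ⟨a, ha⟩ := support_exists h1
  set b := x a with hb
  have hxb : x b = a := key a
  have hba : b ≠ a := ha
  set y := x * Equiv.swap a b with hy
  have hya : y a = a := by rw [hy, mul_apply, swap_apply_left, hxb]
  have hyb : y b = b := by rw [hy, mul_apply, swap_apply_right, ← hb]
  have hyo : ∀ w, w ≠ a → w ≠ b → y w = x w := by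
    intro w w1 w2
    rw [hy, mul_apply, swap_apply_of_ne_of_ne w1 w2]
  have hxo : ∀ w, w ≠ a → w ≠ b → (x w ≠ a ∧ x w ≠ b) := by
    intro w w1 w2
    exact ⟨fun h => w2 (hinj (by rw [h, hxb])), fun h => w1 (hinj (by rw [h, ← hb]))⟩
  have keyy : ∀ s, y (y s) = s := by
    intro s
    by_cases e1 : s = a
    · rw [e1, hya, hya]
    by_cases e2 : s = b
    · rw [e2, hyb, hyb]
    have w1 := hyo s e1 e2
    obtain ⟨n1, n2⟩ := hxo s e1 e2
    have w2 := hyo _ n1 n2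
    rw [w1, w2, key]
  have hxeq : x = y * Equiv.swap a b := by
    rw [hy, mul_assoc, swap_mul_self, mul_one]
  by_cases hy1 : y = 1
  · left; exact ⟨a, b, hba.symm, by rw [hxeq, hy1, one_mul]⟩
  obtain ⟨c, hc⟩ := support_exists hy1
  have hca : c ≠ a := fun h => hc (by rw [h, hya])
  have hcb : c ≠ b := fun h => hc (by rw [h, hyb])
  set d := y c with hd
  have hdc : d ≠ c := hc
  have hda : d ≠ a := by rw [hd, hyo c hca hcb]; exact (hxo c hca hcb).1
  have hdb : d ≠ b := by rw [hd, hyo c hca hcb]; exact (hxo c hca hcb).2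
  have hxc : x c = d := by rw [← hyo c hca hcb, ← hd]
  have hxd : x d = c := by rw [← hyo d hda hdb]; exact keyy c
  set z := y * Equiv.swap c d with hz
  have hza : z a = a := by
    rw [hz, mul_apply, swap_apply_of_ne_of_ne hca.symm hda.symm, hya]
  have hzb : z b = b := by
    rw [hz, mul_apply, swap_apply_of_ne_of_ne hcb.symm hdb.symm, hyb]
  have hzc : z c = c := by rw [hz, mul_apply, swap_apply_left]; exact keyy c
  have hzd : z d = d := by rw [hz, mul_apply, swap_apply_right, ← hd]
  have hzo : ∀ w, w ≠ c → w ≠ d → z w = y w := by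
    intro w w1 w2
    rw [hz, mul_apply, swap_apply_of_ne_of_ne w1 w2]
  have hyeq : y = z * Equiv.swap c d := by
    rw [hz, mul_assoc, swap_mul_self, mul_one]
  by_cases hz1 : z = 1
  · right; left
    have hx2 : x = Equiv.swap c d * Equiv.swap a b := by
      rw [hxeq, hyeq, hz1, one_mul]
    exact ⟨c, d, a, b, hdc.symm, hca, hcb, hda, hdb, hba.symm, hx2⟩
  obtain ⟨e, he⟩ := support_exists hz1
  have hea : e ≠ a := fun h => he (by rw [h, hza])
  have heb : e ≠ b := fun h => he (by rw [h, hzb])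
  have hec : e ≠ c := fun h => he (by rw [h, hzc])
  have hed : e ≠ d := fun h => he (by rw [h, hzd])
  set f := z e with hf
  have hfe : f ≠ e := he
  have hze : z e = x e := by rw [hzo e hec hed, hyo e hea heb]
  have hf' : f = x e := by rw [hf, hze]
  have hfa : f ≠ a := by rw [hf']; exact (hxo e hea heb).1
  have hfb : f ≠ b := by rw [hf']; exact (hxo e hea heb).2
  have hfc : f ≠ c := by rw [hf']; exact fun h => hed (hinj (h.trans hxd.symm))
  have hfd : f ≠ d := by rw [hf']; exact fun h => hec (hinj (h.trans hxc.symm))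
  have hxe : x e = f := hf'.symm
  have keyz : ∀ s, z (z s) = s := by
    intro s
    by_cases e1 : s = a
    · rw [e1, hza, hza]
    by_cases e2 : s = b
    · rw [e2, hzb, hzb]
    by_cases e3 : s = c
    · rw [e3, hzc, hzc]
    by_cases e4 : s = d
    · rw [e4, hzd, hzd]
    have w1 := hzo s e3 e4
    have w2 := hyo s e1 e2
    obtain ⟨n1, n2⟩ := hxo s e1 e2
    have n3 : x s ≠ c := fun h => e4 (hinj (h.trans hxd.symm))
    have n4 : x s ≠ d := fun h => e3 (hinj (h.trans hxc.symm))
    rw [w1, w2, hzo _ n3 n4, hyo _ n1 n2, key]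
  have hxf : x f = e := by
    rw [← hyo f hfa hfb, ← hzo f hfc hfd, hf]
    exact keyz e
  have hu : z = Equiv.swap e f := by
    apply Equiv.ext
    intro s
    by_cases e1 : s = e
    · rw [e1, swap_apply_left, ← hf]
    by_cases e2 : s = f
    · rw [e2, swap_apply_right, hf]
      exact keyz e
    rw [swap_apply_of_ne_of_ne e1 e2]
    by_cases s1 : s = a
    · rw [s1, hza]
    by_cases s2 : s = b
    · rw [s2, hzb]
    by_cases s3 : s = c
    · rw [s3, hzc]
    by_cases s4 : s = d
    · rw [s4, hzd]
    rw [hzo s s3 s4, hyo s s1 s2]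
    by_contra hxw
    obtain ⟨q1, q2⟩ := hxo s s1 s2
    have q3 : x s ≠ c := fun h => s4 (hinj (h.trans hxd.symm))
    have q4 : x s ≠ d := fun h => s3 (hinj (h.trans hxc.symm))
    have q5 : x s ≠ e := fun h => e2 (hinj (h.trans hxf.symm))
    have q6 : x s ≠ f := fun h => e1 (hinj (h.trans hxe.symm))
    exact eight_distinct hba.symm hca.symm hda.symm hea.symm hfa.symm
      (fun h => s1 h.symm) (fun h => q1 h.symm)
      hcb.symm hdb.symm heb.symm hfb.symm (fun h => s2 h.symm) (fun h => q2 h.symm)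
      hdc.symm hec.symm hfc.symm (fun h => s3 h.symm) (fun h => q3 h.symm)
      hed.symm hfd.symm (fun h => s4 h.symm) (fun h => q4 h.symm)
      hfe.symm (fun h => e1 h.symm) (fun h => q5 h.symm)
      (fun h => e2 h.symm) (fun h => q6 h.symm)
      (fun h => hxw h.symm)
  right; right
  have hx3 : x = Equiv.swap e f * Equiv.swap c d * Equiv.swap a b := by
    rw [hxeq, hyeq, hu]
  exact ⟨e, f, c, d, a, b, hfe.symm, hec, hed, hea, heb, hfc, hfd, hfa, hfb,
    hdc.symm, hca, hcb, hda, hdb, hba.symm, hx3⟩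

def Y0 : P7 := t3 0 1 2 * t3 3 4 5

theorem noInv : ∀ a b c d : Fin 7, a≠b→a≠c→a≠d→b≠c→b≠d→c≠d→
    ¬(Equiv.swap a b * Equiv.swap c d * Y0 = Y0 * (Equiv.swap a b * Equiv.swap c d)) := by
  decide

theorem L1 : ∀ x y z : Fin 7, x≠y→x≠z→y≠z→
    (t3 0 1 2 * t3 x y z)*(t3 0 1 2 * t3 x y z) = 1 → t3 x y z ≠ (t3 0 1 2)⁻¹ →
    ∃ w : Fin 7, w≠0 ∧ w≠1 ∧ w≠2 ∧
      (t3 x y z = t3 0 1 w ∨ t3 x y z = t3 1 2 w ∨ t3 x y z = t3 2 0 w) := by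
  decide

theorem L2 : ∀ x y z : Fin 7, x≠y→x≠z→y≠z→
    (t3 0 1 2 * t3 x y z)*(t3 0 1 2 * t3 x y z) = 1 →
    (t3 0 1 3 * t3 x y z)*(t3 0 1 3 * t3 x y z) = 1 →
    t3 x y z ≠ (t3 0 1 2)⁻¹ → t3 x y z ≠ (t3 0 1 3)⁻¹ →
    ∃ w : Fin 7, w≠0 ∧ w≠1 ∧ t3 x y z = t3 0 1 w := by
  decide

theorem relPairs : ∀ i j : Fin 7, 2 ≤ i → 2 ≤ j → i ≠ j →
    ((t3 0 1 i * t3 0 1 j) * (t3 0 1 i * t3 0 1 j) = 1 ∧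
      t3 0 1 i ≠ (t3 0 1 j)⁻¹ ∧ t3 0 1 i ≠ t3 0 1 j) := by
  decide

theorem w0_comm : (Equiv.swap 3 4 * Equiv.swap 5 6) * t3 0 1 2
    = t3 0 1 2 * (Equiv.swap 3 4 * Equiv.swap 5 6) := by decide

theorem w0_sq : (Equiv.swap (3:Fin 7) 4 * Equiv.swap 5 6) * (Equiv.swap (3:Fin 7) 4 * Equiv.swap 5 6) = 1 := by decide

theorem w0_ne : (Equiv.swap (3:Fin 7) 4 * Equiv.swap 5 6) ≠ 1 := by decide

theorem w0_sign : sign (Equiv.swap (3:Fin 7) 4 * Equiv.swap 5 6) = 1 := by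
  rw [map_mul, sign_swap (by decide), sign_swap (by decide)]
  decide

def isT3 (u : P7) : Prop := ∃ a b c : Fin 7, a≠b ∧ a≠c ∧ b≠c ∧ u = t3 a b c

theorem Y0_cycleType : Y0.cycleType = {3, 3} := by
  rw [Y0, Equiv.Perm.Disjoint.cycleType_mul (t3_disjoint (by decide) (by decide) (by decide) (by decide) (by decide)
      (by decide) (by decide) (by decide) (by decide)),
    t3_cycleType (by decide) (by decide) (by decide),
    t3_cycleType (by decide) (by decide) (by decide)]
  rfl

theorem conj33 {u : P7} (h3 : u ^ 3 = 1) (h1 : u ≠ 1) (hno : ¬ isT3 u) :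
    ∃ σ : P7, σ * Y0 * σ⁻¹ = u := by
  rcases cube_decomp h3 h1 with ⟨a,b,c,u1,u2,u3,ue⟩ |
    ⟨a,b,c,d,e,f,u1,u2,u3,u4,u5,u6,v1,v2,v3,v4,v5,v6,v7,v8,v9,ue⟩
  · exact absurd ⟨a,b,c,u1,u2,u3,ue⟩ hno
  · apply isConj_iff.mp
    rw [isConj_iff_cycleType_eq, Y0_cycleType, ue,
      Equiv.Perm.Disjoint.cycleType_mul (t3_disjoint v1 v2 v3 v4 v5 v6 v7 v8 v9),
      t3_cycleType u1 u2 u3, t3_cycleType u4 u5 u6]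
    rfl

theorem sign_coe (t : A7) : sign (t : P7) = 1 := mem_alternatingGroup.mp t.2

def Pp (x : A7) : Prop := x ^ 3 = 1 ∧ x ≠ 1 ∧ ∃ t : A7, t ^ 2 = 1 ∧ t ≠ 1 ∧ t * x = x * t

theorem Pp_apply (f : A7 ≃* A7) {x : A7} (h : Pp x) : Pp (f x) := by
  obtain ⟨h3, h1, t, ht2, ht1, htx⟩ := h
  exact ⟨by rw [← map_pow, h3, map_one],
    fun h => h1 (f.injective (by rw [h, map_one])),
    f t, by rw [← map_pow, ht2, map_one],
    fun h => ht1 (f.injective (by rw [h, map_one])),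
    by rw [← map_mul, htx, map_mul]⟩

theorem Pp_iff (f : A7 ≃* A7) (x : A7) : Pp (f x) ↔ Pp x :=
  ⟨fun h => by simpa using Pp_apply f.symm h, Pp_apply f⟩

theorem Pp_iff_isT3 (x : A7) : Pp x ↔ isT3 (x : P7) := by
  constructor
  · rintro ⟨h3, h1, t, ht2, ht1, htx⟩
    by_contra hno
    have h3' : (x : P7) ^ 3 = 1 := by
      have := congrArg Subtype.val h3
      push_cast at this
      exact this
    have h1' : (x : P7) ≠ 1 := fun h => h1 (Subtype.ext h)
    obtain ⟨σ, hσ⟩ := conj33 h3' h1' hno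
    have hc : (t : P7) * x = x * t := by
      have := congrArg Subtype.val htx
      push_cast at this
      exact this
    have htt : (t : P7) * t = 1 := by
      have := congrArg Subtype.val ht2
      push_cast at this
      rw [pow_two] at this
      exact this
    have hY : Y0 = σ⁻¹ * (x:P7) * σ := by rw [← hσ]; group
    set t' : P7 := σ⁻¹ * t * σ with ht'
    have hcomm : t' * Y0 = Y0 * t' := by
      rw [ht', hY, show σ⁻¹ * (t:P7) * σ * (σ⁻¹ * (x:P7) * σ) = σ⁻¹ * ((t:P7) * x) * σ by group,
        hc, show σ⁻¹ * ((x:P7) * t) * σ = σ⁻¹ * (x:P7) * σ * (σ⁻¹ * (t:P7) * σ) by group]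
    have ht2' : t' ^ 2 = 1 := by
      rw [pow_two, ht', show σ⁻¹ * (t:P7) * σ * (σ⁻¹ * (t:P7) * σ) = σ⁻¹ * ((t:P7) * t) * σ by group,
        htt]
      group
    have ht1' : t' ≠ 1 := by
      intro h
      apply ht1
      apply Subtype.ext
      have : (t : P7) = σ * (σ⁻¹ * (t:P7) * σ) * σ⁻¹ := by group
      rw [← ht'] at this
      rw [this, h]
      simp
    have hsign : sign t' = 1 := by
      rw [ht', map_mul, map_mul, sign_coe t, map_inv]
      simp [mul_comm]
    rcases invol_decomp ht2' ht1' with ⟨a,b,hab,he⟩ |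
      ⟨a,b,c,d,p1,p2,p3,p4,p5,p6,he⟩ |
      ⟨a,b,c,d,e,f,q1,q2,q3,q4,q5,q6,q7,q8,q9,q10,q11,q12,q13,q14,q15,he⟩
    · rw [he, sign_swap hab] at hsign
      exact absurd hsign (by decide)
    · exact noInv a b c d p1 p2 p3 p4 p5 p6 (by rw [← he]; exact hcomm)
    · rw [he, map_mul, map_mul, sign_swap q1, sign_swap q10, sign_swap q15] at hsign
      exact absurd hsign (by decide)
  · rintro ⟨a, b, c, hab, hac, hbc, he⟩
    have hiconj : IsConj (t3 0 1 2) (x : P7) := by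
      rw [isConj_iff_cycleType_eq, t3_cycleType (by decide) (by decide) (by decide), he,
        t3_cycleType hab hac hbc]
    obtain ⟨σ, hσ⟩ := isConj_iff.mp hiconj
    set w : P7 := σ * (Equiv.swap 3 4 * Equiv.swap 5 6) * σ⁻¹ with hw
    have hwsign : sign w = 1 := by
      rw [hw, map_mul, map_mul, w0_sign, map_inv]
      simp [mul_comm]
    refine ⟨?_, ?_, ⟨w, mem_alternatingGroup.mpr hwsign⟩, ?_, ?_, ?_⟩
    · apply Subtype.ext
      push_cast
      rw [he]
      exact t3_cube hab hac hbc
    · intro h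
      apply t3_ne_one hab hac
      rw [← he]
      exact congrArg Subtype.val h
    · apply Subtype.ext
      push_cast
      rw [pow_two, hw,
        show σ * (Equiv.swap 3 4 * Equiv.swap 5 6) * σ⁻¹ * (σ * (Equiv.swap 3 4 * Equiv.swap 5 6) * σ⁻¹)
          = σ * ((Equiv.swap 3 4 * Equiv.swap 5 6) * (Equiv.swap 3 4 * Equiv.swap 5 6)) * σ⁻¹ by group,
        w0_sq]
      group
    · intro h
      apply w0_ne
      have h' : w = 1 := by
        have := congrArg Subtype.val h
        exact this
      rw [hw] at h'
      have : Equiv.swap 3 4 * Equiv.swap 5 6 = σ⁻¹ * (σ * (Equiv.swap 3 4 * Equiv.swap 5 6) * σ⁻¹) * σ := by group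
      rw [this, h']
      group
    · apply Subtype.ext
      push_cast
      rw [hw, ← hσ,
        show σ * (Equiv.swap 3 4 * Equiv.swap 5 6) * σ⁻¹ * (σ * t3 0 1 2 * σ⁻¹)
          = σ * ((Equiv.swap 3 4 * Equiv.swap 5 6) * t3 0 1 2) * σ⁻¹ by group,
        w0_comm,
        show σ * (t3 0 1 2 * (Equiv.swap 3 4 * Equiv.swap 5 6)) * σ⁻¹
          = (σ * t3 0 1 2 * σ⁻¹) * (σ * (Equiv.swap 3 4 * Equiv.swap 5 6) * σ⁻¹) by group]

def T : Set P7 := {t3 0 1 2, t3 0 1 3, t3 0 1 4, t3 0 1 5, t3 0 1 6}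

theorem mem_T {w : Fin 7} (h0 : w ≠ 0) (h1 : w ≠ 1) : t3 0 1 w ∈ Subgroup.closure T := by
  apply Subgroup.subset_closure
  fin_cases w <;> simp_all [T]

theorem gen1 {w : Fin 7} (h0 : w ≠ 0) (h1 : w ≠ 1) : t3 1 0 w ∈ Subgroup.closure T := by
  have h : t3 1 0 w = (t3 0 1 w)⁻¹ := by
    rw [t3_inv, t3_rot h1 h0 (by decide)]
  rw [h]
  exact inv_mem (mem_T h0 h1)

theorem gen2 {y z : Fin 7} (hy0 : y ≠ 0) (hy1 : y ≠ 1) (hz0 : z ≠ 0) (hz1 : z ≠ 1)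
    (hyz : y ≠ z) : t3 1 y z ∈ Subgroup.closure T := by
  have h := t3_conj (t3 0 1 y) 0 1 z
  rw [t3_apply₁ (by decide) hy0.symm, t3_apply₂ hy1.symm hy0,
    t3_apply_ne hz0 hz1 hyz.symm] at h
  rw [← h]
  exact mul_mem (mul_mem (mem_T hy0 hy1) (mem_T hz0 hz1)) (inv_mem (mem_T hy0 hy1))

theorem gen3 {y z : Fin 7} (hy0 : y ≠ 0) (hy1 : y ≠ 1) (hz0 : z ≠ 0) (hz1 : z ≠ 1)
    (hyz : y ≠ z) : t3 0 y z ∈ Subgroup.closure T := by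
  have h := t3_conj (t3 0 1 z) 1 y z
  rw [t3_apply₂ hz1.symm hz0, t3_apply_ne hy0 hy1 hyz, t3_apply₃] at h
  have h2 : t3 0 y z = (t3 0 1 z * t3 1 y z * (t3 0 1 z)⁻¹)⁻¹ := by
    rw [h, t3_inv]
  rw [h2]
  exact inv_mem (mul_mem (mul_mem (mem_T hz0 hz1) (gen2 hy0 hy1 hz0 hz1 hyz))
    (inv_mem (mem_T hz0 hz1)))

theorem gen4 {x y z : Fin 7} (hx0 : x ≠ 0) (hx1 : x ≠ 1) (hy0 : y ≠ 0) (hy1 : y ≠ 1)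
    (hz0 : z ≠ 0) (hz1 : z ≠ 1) (hxy : x ≠ y) (hxz : x ≠ z) (hyz : y ≠ z) :
    t3 x y z ∈ Subgroup.closure T := by
  have h := t3_conj (t3 0 1 x) 1 y z
  rw [t3_apply₂ hx1.symm hx0, t3_apply_ne hy0 hy1 hxy.symm,
    t3_apply_ne hz0 hz1 hxz.symm] at h
  rw [← h]
  exact mul_mem (mul_mem (mem_T hx0 hx1) (gen2 hy0 hy1 hz0 hz1 hyz))
    (inv_mem (mem_T hx0 hx1))

theorem gen0 {y z : Fin 7} (hy0 : y ≠ 0) (hz0 : z ≠ 0) (hyz : y ≠ z) :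
    t3 0 y z ∈ Subgroup.closure T := by
  by_cases hy1 : y = 1
  · subst hy1
    exact mem_T hz0 (fun h => hyz h.symm)
  by_cases hz1 : z = 1
  · subst hz1
    have h : t3 0 y 1 = t3 1 0 y := by
      rw [t3_rot hy0.symm (by decide) hy1, t3_rot hy1 hy0 (by decide)]
    rw [h]
    exact gen1 hy0 hy1
  · exact gen3 hy0 hy1 hz0 hz1 hyz

theorem gen1' {y z : Fin 7} (hy0 : y ≠ 0) (hy1 : y ≠ 1) (hz0 : z ≠ 0) (hz1 : z ≠ 1)
    (hyz : y ≠ z) : t3 1 y z ∈ Subgroup.closure T :=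
  gen2 hy0 hy1 hz0 hz1 hyz

theorem gen_aux {x y z : Fin 7} (hxy : x ≠ y) (hxz : x ≠ z) (hyz : y ≠ z) :
    t3 x y z ∈ Subgroup.closure T := by
  by_cases hx0 : x = 0
  · subst hx0
    exact gen0 hxy.symm hxz.symm hyz
  by_cases hy0 : y = 0
  · subst hy0
    rw [t3_rot hxy hxz hyz]
    exact gen0 hyz.symm hx0 (fun h => hxz h.symm)
  by_cases hz0 : z = 0
  · subst hz0
    rw [t3_rot hxy hxz hyz, t3_rot hyz hxy.symm hxz.symm]
    exact gen0 hx0 hy0 hxy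
  -- none is 0
  by_cases hx1 : x = 1
  · subst hx1
    exact gen1' hy0 hxy.symm hz0 hxz.symm hyz
  by_cases hy1 : y = 1
  · subst hy1
    rw [t3_rot hxy hxz hyz]
    exact gen1' hz0 hyz.symm hx0 hx1 (fun h => hxz h.symm)
  by_cases hz1 : z = 1
  · subst hz1
    rw [t3_rot hxy hxz hyz, t3_rot hyz hxy.symm hxz.symm]
    exact gen1' hx0 hx1 hy0 hy1 hxy
  · exact gen4 hx0 hx1 hy0 hy1 hz0 hz1 hxy hxz hyz

theorem card3 {a b c : Fin 7} (hab : a ≠ b) (hac : a ≠ c) (hbc : b ≠ c) :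
    ({a, b, c} : Finset (Fin 7)).card = 3 := by
  rw [Finset.card_insert_of_notMem (by simp [hab, hac]),
    Finset.card_insert_of_notMem (by simp [hbc]), Finset.card_singleton]

theorem closure_T_eq : Subgroup.closure T = A7 := by
  apply le_antisymm
  · rw [Subgroup.closure_le]
    intro u hu
    simp only [T, Set.mem_insert_iff, Set.mem_singleton_iff] at hu
    rcases hu with rfl|rfl|rfl|rfl|rfl <;>
      exact SetLike.mem_coe.mpr (t3_mem (by decide) (by decide))
  · show alternatingGroup (Fin 7) ≤ Subgroup.closure T
    rw [← closure_three_cycles_eq_alternating, Subgroup.closure_le]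
    intro u hu
    have h3 : u ^ 3 = 1 := by
      rw [← hu.orderOf]
      exact pow_orderOf_eq_one u
    have h1 : u ≠ 1 := by
      intro h
      have := hu.card_support
      rw [h] at this
      simp at this
    rcases cube_decomp h3 h1 with ⟨a,b,c,d1,d2,d3,he⟩ |
      ⟨a,b,c,d,e,f,u1,u2,u3,u4,u5,u6,v1,v2,v3,v4,v5,v6,v7,v8,v9,he⟩
    · rw [he]
      exact SetLike.mem_coe.mpr (gen_aux d1 d2 d3)
    · exfalso
      have hcs := hu.card_support
      rw [he, (t3_disjoint v1 v2 v3 v4 v5 v6 v7 v8 v9).support_mul,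
        t3_support u1 u2 u3, t3_support u4 u5 u6,
        Finset.card_union_of_disjoint] at hcs
      · rw [card3 u1 u2 u3, card3 u4 u5 u6] at hcs
        exact absurd hcs (by decide)
      · rw [Finset.disjoint_left]
        intro s hs hs2
        simp only [Finset.mem_insert, Finset.mem_singleton] at hs hs2
        rcases hs with rfl|rfl|rfl <;> rcases hs2 with h|h|h <;> simp_all

theorem centralizer_trivial {q : P7} (hq : ∀ u : P7, sign u = 1 → q * u * q⁻¹ = u) :
    q = 1 := by
  apply Equiv.ext
  intro i
  have key : ∀ k l : Fin 7, k ≠ l → i + k ≠ i + l := fun k l h hh => h (add_left_cancel hh)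
  have hi0 : ∀ k : Fin 7, k ≠ 0 → i + k ≠ i := by
    intro k h hh
    apply key k 0 h
    rwa [add_zero]
  have qinj := q.injective
  have mem3 : ∀ k l : Fin 7, k ≠ 0 → l ≠ 0 → k ≠ l →
      q i = i ∨ q i = i + k ∨ q i = i + l := by
    intro k l hk hl hkl
    have s1 : sign (t3 i (i+k) (i+l)) = 1 :=
      t3_sign (hi0 k hk).symm (key k l hkl)
    have e1 := hq _ s1
    rw [t3_conj] at e1
    by_contra h
    push_neg at h
    have h2 : t3 i (i+k) (i+l) (q i) = q i := t3_apply_ne h.1 h.2.1 h.2.2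
    rw [← e1, t3_apply₁ (qinj.ne (hi0 k hk).symm) (qinj.ne (hi0 l hl).symm)] at h2
    exact (hi0 k hk) (qinj h2)
  have m1 := mem3 1 2 (by decide) (by decide) (by decide)
  have m2 := mem3 3 4 (by decide) (by decide) (by decide)
  rcases m1 with h|h|h
  · exact h
  · rcases m2 with h'|h'|h'
    · exact h'
    · exact absurd (h.symm.trans h') (key 1 3 (by decide))
    · exact absurd (h.symm.trans h') (key 1 4 (by decide))
  · rcases m2 with h'|h'|h'
    · exact h'
    · exact absurd (h.symm.trans h') (key 2 3 (by decide))
    · exact absurd (h.symm.trans h') (key 2 4 (by decide))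

theorem coe456 : ∀ u : Fin 7, u≠0→u≠1→u≠2→u≠3→ u=4∨u=5∨u=6 := by decide

theorem exists_conj (f : MulAut A7) :
    ∃ p : P7, ∀ x : A7, ((f x : A7) : P7) = p * (x : P7) * p⁻¹ := by
  classical
  have memA : ∀ w : Fin 7, (2:Fin 7) ≤ w → t3 0 1 w ∈ A7 := by
    intro w hw
    refine t3_mem (by decide) fun hh => ?_
    rw [← hh] at hw
    exact absurd hw (by decide)
  have h0i : ∀ i : Fin 7, (2:Fin 7) ≤ i → (0:Fin 7) ≠ i := by
    intro i h2 h
    rw [← h] at h2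
    exact absurd h2 (by decide)
  have h1i : ∀ i : Fin 7, (2:Fin 7) ≤ i → (1:Fin 7) ≠ i := by
    intro i h2 h
    rw [← h] at h2
    exact absurd h2 (by decide)
  have form : ∀ (g : MulAut A7) (i : Fin 7) (h2 : (2:Fin 7) ≤ i),
      isT3 ((g ⟨t3 0 1 i, memA i h2⟩ : A7) : P7) := by
    intro g i h2
    have hp : Pp ⟨t3 0 1 i, memA i h2⟩ :=
      (Pp_iff_isT3 _).mpr ⟨0, 1, i, by decide, h0i i h2, h1i i h2, rfl⟩
    exact (Pp_iff_isT3 _).mp (Pp_apply (g : A7 ≃* A7) hp)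
  have relt : ∀ (g : MulAut A7) (i j : Fin 7) (h2i : (2:Fin 7) ≤ i) (h2j : (2:Fin 7) ≤ j)
      (hij : i ≠ j),
      ((((g ⟨t3 0 1 i, memA i h2i⟩ : A7) : P7) * ((g ⟨t3 0 1 j, memA j h2j⟩ : A7) : P7)) *
        (((g ⟨t3 0 1 i, memA i h2i⟩ : A7) : P7) * ((g ⟨t3 0 1 j, memA j h2j⟩ : A7) : P7)) = 1) ∧
      (((g ⟨t3 0 1 i, memA i h2i⟩ : A7) : P7) ≠ (((g ⟨t3 0 1 j, memA j h2j⟩ : A7) : P7))⁻¹) ∧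
      (((g ⟨t3 0 1 i, memA i h2i⟩ : A7) : P7) ≠ ((g ⟨t3 0 1 j, memA j h2j⟩ : A7) : P7)) := by
    intro g i j h2i h2j hij
    obtain ⟨r1, r2, r3⟩ := relPairs i j h2i h2j hij
    refine ⟨?_, ?_, ?_⟩
    · have hsub : (⟨t3 0 1 i, memA i h2i⟩ * ⟨t3 0 1 j, memA j h2j⟩ : A7) *
          (⟨t3 0 1 i, memA i h2i⟩ * ⟨t3 0 1 j, memA j h2j⟩ : A7) = 1 := by
        apply Subtype.ext
        push_cast
        exact r1
      have h4 := congrArg (fun z : A7 => ((g z : A7) : P7)) hsub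
      simp only [map_mul, map_one] at h4
      push_cast at h4
      exact h4
    · intro h
      apply r2
      have h6 : (⟨t3 0 1 i, memA i h2i⟩ : A7) = (⟨t3 0 1 j, memA j h2j⟩ : A7)⁻¹ := by
        apply g.injective
        apply Subtype.ext
        rw [map_inv]
        push_cast
        exact h
      have h7 := congrArg Subtype.val h6
      push_cast at h7
      exact h7
    · intro h
      apply r3
      have h6 : (⟨t3 0 1 i, memA i h2i⟩ : A7) = (⟨t3 0 1 j, memA j h2j⟩ : A7) :=
        g.injective (Subtype.ext h)
      exact congrArg Subtype.val h6
  -- normalize: image of σ2 = (0 1 2)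
  obtain ⟨x2, y2, z2, d1, d2, d3, he2⟩ := form f 2 (by decide)
  have hconj2 : IsConj (((f ⟨t3 0 1 2, memA 2 (by decide)⟩ : A7) : P7)) (t3 0 1 2) := by
    rw [isConj_iff_cycleType_eq, he2, t3_cycleType d1 d2 d3,
      t3_cycleType (by decide) (by decide) (by decide)]
  obtain ⟨q, hq⟩ := isConj_iff.mp hconj2
  set g1 : MulAut A7 := MulAut.conjNormal q * f with hg1
  have hg1v : ∀ x : A7, ((g1 x : A7) : P7) = q * ((f x : A7) : P7) * q⁻¹ := by
    intro x
    rw [hg1, MulAut.mul_apply, MulAut.conjNormal_apply]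
  have hg1σ2 : ((g1 ⟨t3 0 1 2, memA 2 (by decide)⟩ : A7) : P7) = t3 0 1 2 := by
    rw [hg1v, hq]
  -- normalize: image of σ3 = (0 1 3)
  obtain ⟨x3, y3, z3, e1, e2, e3, he3⟩ := form g1 3 (by decide)
  have hrel23 := relt g1 2 3 (by decide) (by decide) (by decide)
  have hL1 := L1 x3 y3 z3 e1 e2 e3 (by rw [← he3, ← hg1σ2]; exact hrel23.1)
    (by
      intro hh
      apply hrel23.2.1
      rw [hg1σ2, he3, hh, inv_inv])
  rw [← he3] at hL1
  obtain ⟨w3, hw30, hw31, hw32, hw3c⟩ := hL1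
  have hr : ∃ r : P7, r * t3 0 1 2 * r⁻¹ = t3 0 1 2 ∧
      r * ((g1 ⟨t3 0 1 3, memA 3 (by decide)⟩ : A7) : P7) * r⁻¹ = t3 0 1 3 := by
    have hs0 : Equiv.swap 3 w3 0 = 0 :=
      swap_apply_of_ne_of_ne (by decide) (fun h => hw30 h.symm)
    have hs1 : Equiv.swap 3 w3 1 = 1 :=
      swap_apply_of_ne_of_ne (by decide) (fun h => hw31 h.symm)
    have hs2 : Equiv.swap 3 w3 2 = 2 :=
      swap_apply_of_ne_of_ne (by decide) (fun h => hw32 h.symm)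
    have hsw : Equiv.swap 3 w3 w3 = 3 := swap_apply_right 3 w3
    have hsA : Equiv.swap 3 w3 * t3 0 1 2 * (Equiv.swap 3 w3)⁻¹ = t3 0 1 2 := by
      rw [t3_conj, hs0, hs1, hs2]
    rcases hw3c with hc|hc|hc
    · refine ⟨Equiv.swap 3 w3, hsA, ?_⟩
      rw [hc, t3_conj, hs0, hs1, hsw]
    · refine ⟨(t3 0 1 2 * t3 0 1 2) * Equiv.swap 3 w3, ?_, ?_⟩
      · rw [show ((t3 0 1 2 * t3 0 1 2) * Equiv.swap 3 w3) * t3 0 1 2 *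
            ((t3 0 1 2 * t3 0 1 2) * Equiv.swap 3 w3)⁻¹
            = (t3 0 1 2 * t3 0 1 2) * (Equiv.swap 3 w3 * t3 0 1 2 * (Equiv.swap 3 w3)⁻¹) *
              (t3 0 1 2 * t3 0 1 2)⁻¹ by group, hsA]
        decide
      · rw [hc, show ((t3 0 1 2 * t3 0 1 2) * Equiv.swap 3 w3) * t3 1 2 w3 *
            ((t3 0 1 2 * t3 0 1 2) * Equiv.swap 3 w3)⁻¹
            = (t3 0 1 2 * t3 0 1 2) * (Equiv.swap 3 w3 * t3 1 2 w3 * (Equiv.swap 3 w3)⁻¹) *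
              (t3 0 1 2 * t3 0 1 2)⁻¹ by group, t3_conj, hs1, hs2, hsw]
        decide
    · refine ⟨t3 0 1 2 * Equiv.swap 3 w3, ?_, ?_⟩
      · rw [show (t3 0 1 2 * Equiv.swap 3 w3) * t3 0 1 2 *
            (t3 0 1 2 * Equiv.swap 3 w3)⁻¹
            = t3 0 1 2 * (Equiv.swap 3 w3 * t3 0 1 2 * (Equiv.swap 3 w3)⁻¹) *
              (t3 0 1 2)⁻¹ by group, hsA]
        decide
      · rw [hc, show (t3 0 1 2 * Equiv.swap 3 w3) * t3 2 0 w3 *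
            (t3 0 1 2 * Equiv.swap 3 w3)⁻¹
            = t3 0 1 2 * (Equiv.swap 3 w3 * t3 2 0 w3 * (Equiv.swap 3 w3)⁻¹) *
              (t3 0 1 2)⁻¹ by group, t3_conj, hs2, hs0, hsw]
        decide
  obtain ⟨r, hrA, hrτ⟩ := hr
  set g2 : MulAut A7 := MulAut.conjNormal r * g1 with hg2
  have hg2v : ∀ x : A7, ((g2 x : A7) : P7) = r * ((g1 x : A7) : P7) * r⁻¹ := by
    intro x
    rw [hg2, MulAut.mul_apply, MulAut.conjNormal_apply]
  have hg2σ2 : ((g2 ⟨t3 0 1 2, memA 2 (by decide)⟩ : A7) : P7) = t3 0 1 2 := by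
    rw [hg2v, hg1σ2, hrA]
  have hg2σ3 : ((g2 ⟨t3 0 1 3, memA 3 (by decide)⟩ : A7) : P7) = t3 0 1 3 := by
    rw [hg2v]
    exact hrτ
  -- the images of σ4 σ5 σ6
  have step : ∀ (i : Fin 7) (h2i : (2:Fin 7) ≤ i), i ≠ 2 → i ≠ 3 →
      ∃ w : Fin 7, w≠0 ∧ w≠1 ∧
        ((g2 ⟨t3 0 1 i, memA i h2i⟩ : A7) : P7) = t3 0 1 w := by
    intro i h2i hi2 hi3
    obtain ⟨x, y, z, f1, f2, f3, hei⟩ := form g2 i h2i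
    have h2 := relt g2 2 i (by decide) h2i (fun h => hi2 h.symm)
    have h3 := relt g2 3 i (by decide) h2i (fun h => hi3 h.symm)
    have hL := L2 x y z f1 f2 f3
      (by rw [← hei, ← hg2σ2]; exact h2.1)
      (by rw [← hei, ← hg2σ3]; exact h3.1)
      (by intro hh; apply h2.2.1; rw [hg2σ2, hei, hh, inv_inv])
      (by intro hh; apply h3.2.1; rw [hg2σ3, hei, hh, inv_inv])
    rw [← hei] at hL
    exact hL
  obtain ⟨w4, hw40, hw41, hw4⟩ := step 4 (by decide) (by decide) (by decide)
  obtain ⟨w5, hw50, hw51, hw5⟩ := step 5 (by decide) (by decide) (by decide)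
  obtain ⟨w6, hw60, hw61, hw6⟩ := step 6 (by decide) (by decide) (by decide)
  have neq : ∀ (i j : Fin 7) (h2i : (2:Fin 7) ≤ i) (h2j : (2:Fin 7) ≤ j), i ≠ j →
      ((g2 ⟨t3 0 1 i, memA i h2i⟩ : A7) : P7) ≠ ((g2 ⟨t3 0 1 j, memA j h2j⟩ : A7) : P7) :=
    fun i j h2i h2j hij => (relt g2 i j h2i h2j hij).2.2
  have hw42 : w4 ≠ 2 := fun h =>
    neq 4 2 (by decide) (by decide) (by decide) (by rw [hw4, hg2σ2, h])
  have hw43 : w4 ≠ 3 := fun h =>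
    neq 4 3 (by decide) (by decide) (by decide) (by rw [hw4, hg2σ3, h])
  have hw52 : w5 ≠ 2 := fun h =>
    neq 5 2 (by decide) (by decide) (by decide) (by rw [hw5, hg2σ2, h])
  have hw53 : w5 ≠ 3 := fun h =>
    neq 5 3 (by decide) (by decide) (by decide) (by rw [hw5, hg2σ3, h])
  have hw62 : w6 ≠ 2 := fun h =>
    neq 6 2 (by decide) (by decide) (by decide) (by rw [hw6, hg2σ2, h])
  have hw63 : w6 ≠ 3 := fun h =>
    neq 6 3 (by decide) (by decide) (by decide) (by rw [hw6, hg2σ3, h])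
  have hw45 : w4 ≠ w5 := fun h =>
    neq 4 5 (by decide) (by decide) (by decide) (by rw [hw4, hw5, h])
  have hw46 : w4 ≠ w6 := fun h =>
    neq 4 6 (by decide) (by decide) (by decide) (by rw [hw4, hw6, h])
  have hw56 : w5 ≠ w6 := fun h =>
    neq 5 6 (by decide) (by decide) (by decide) (by rw [hw5, hw6, h])
  -- the finishing move, given a permutation matching g2 on all five generators
  have final : ∀ p : P7,
      (p * t3 0 1 2 * p⁻¹ = ((g2 ⟨t3 0 1 2, memA 2 (by decide)⟩ : A7) : P7)) →
      (p * t3 0 1 3 * p⁻¹ = ((g2 ⟨t3 0 1 3, memA 3 (by decide)⟩ : A7) : P7)) →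
      (p * t3 0 1 4 * p⁻¹ = ((g2 ⟨t3 0 1 4, memA 4 (by decide)⟩ : A7) : P7)) →
      (p * t3 0 1 5 * p⁻¹ = ((g2 ⟨t3 0 1 5, memA 5 (by decide)⟩ : A7) : P7)) →
      (p * t3 0 1 6 * p⁻¹ = ((g2 ⟨t3 0 1 6, memA 6 (by decide)⟩ : A7) : P7)) →
      ∃ pp : P7, ∀ x : A7, ((f x : A7) : P7) = pp * (x : P7) * pp⁻¹ := by
    intro p hp2 hp3 hp4 hp5 hp6
    set hAut : MulAut A7 := MulAut.conjNormal p⁻¹ * g2 with hhAut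
    have hhv : ∀ x : A7, ((hAut x : A7) : P7) = p⁻¹ * ((g2 x : A7) : P7) * p⁻¹⁻¹ := by
      intro x
      rw [hhAut, MulAut.mul_apply, MulAut.conjNormal_apply]
    set S : Set A7 := {⟨t3 0 1 2, memA 2 (by decide)⟩, ⟨t3 0 1 3, memA 3 (by decide)⟩,
      ⟨t3 0 1 4, memA 4 (by decide)⟩, ⟨t3 0 1 5, memA 5 (by decide)⟩,
      ⟨t3 0 1 6, memA 6 (by decide)⟩} with hS
    have hMem : ∀ u ∈ S, hAut u = u := by
      rintro u (rfl|rfl|rfl|rfl|rfl) <;> apply Subtype.ext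
      · rw [hhv, ← hp2]; group
      · rw [hhv, ← hp3]; group
      · rw [hhv, ← hp4]; group
      · rw [hhv, ← hp5]; group
      · rw [hhv, ← hp6]; group
    have hcl : Subgroup.closure S = (⊤ : Subgroup A7) := by
      apply Subgroup.map_injective (alternatingGroup (Fin 7)).subtype_injective
      rw [MonoidHom.map_closure, ← MonoidHom.range_eq_map, Subgroup.range_subtype]
      have himg : (alternatingGroup (Fin 7)).subtype '' S = T := by
        simp only [hS, Set.image_insert_eq, Set.image_singleton]
        rfl
      rw [himg]
      exact closure_T_eq
    have hle : Subgroup.closure S ≤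
        MonoidHom.eqLocus (hAut : A7 ≃* A7).toMonoidHom (MonoidHom.id A7) := by
      rw [Subgroup.closure_le]
      intro u hu
      exact hMem u hu
    have hall : ∀ x : A7, hAut x = x := by
      intro x
      have hx : x ∈ Subgroup.closure S := by rw [hcl]; trivial
      exact hle hx
    refine ⟨q⁻¹ * (r⁻¹ * p), fun x => ?_⟩
    have e3 := hhv x
    rw [hall x] at e3
    have e2 : ((g2 x : A7) : P7) = p * (x : P7) * p⁻¹ := by
      rw [show ((g2 x : A7) : P7) = p * (p⁻¹ * ((g2 x : A7) : P7) * p⁻¹⁻¹) * p⁻¹ by group,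
        ← e3]
    have e4 : r * (q * ((f x : A7) : P7) * q⁻¹) * r⁻¹ = p * (x : P7) * p⁻¹ := by
      rw [← hg1v, ← hg2v]
      exact e2
    rw [show ((f x : A7) : P7)
        = q⁻¹ * (r⁻¹ * (r * (q * ((f x : A7) : P7) * q⁻¹) * r⁻¹) * r) * q by group, e4]
    group
  rcases coe456 w4 hw40 hw41 hw42 hw43 with h4|h4|h4 <;>
    rcases coe456 w5 hw50 hw51 hw52 hw53 with h5|h5|h5 <;>
      rcases coe456 w6 hw60 hw61 hw62 hw63 with h6|h6|h6 <;>
        subst h4 <;> subst h5 <;> subst h6 <;>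
    first
    | exact absurd rfl hw45
    | exact absurd rfl hw46
    | exact absurd rfl hw56
    | exact final 1 (by rw [hg2σ2]; decide) (by rw [hg2σ3]; decide)
        (by rw [hw4]; decide) (by rw [hw5]; decide) (by rw [hw6]; decide)
    | exact final (Equiv.swap 5 6) (by rw [hg2σ2]; decide) (by rw [hg2σ3]; decide)
        (by rw [hw4]; decide) (by rw [hw5]; decide) (by rw [hw6]; decide)
    | exact final (Equiv.swap 4 5) (by rw [hg2σ2]; decide) (by rw [hg2σ3]; decide)
        (by rw [hw4]; decide) (by rw [hw5]; decide) (by rw [hw6]; decide)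
    | exact final (Equiv.swap 4 6) (by rw [hg2σ2]; decide) (by rw [hg2σ3]; decide)
        (by rw [hw4]; decide) (by rw [hw5]; decide) (by rw [hw6]; decide)
    | exact final (t3 4 5 6) (by rw [hg2σ2]; decide) (by rw [hg2σ3]; decide)
        (by rw [hw4]; decide) (by rw [hw5]; decide) (by rw [hw6]; decide)
    | exact final (t3 4 6 5) (by rw [hg2σ2]; decide) (by rw [hg2σ3]; decide)
        (by rw [hw4]; decide) (by rw [hw5]; decide) (by rw [hw6]; decide)
end Stmt11Aux

open Stmt11Aux SemidirectProduct in
/-- Any semidirect product A₇ ⋊ ℤ₂ is isomorphic to A₇ × ℤ₂ or to S₇. -/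
theorem stmt_11
    (φ : Multiplicative (ZMod 2) →* MulAut (alternatingGroup (Fin 7))) :
    Nonempty ((alternatingGroup (Fin 7)) ⋊[φ] Multiplicative (ZMod 2) ≃*
        (alternatingGroup (Fin 7)) × Multiplicative (ZMod 2)) ∨
    Nonempty ((alternatingGroup (Fin 7)) ⋊[φ] Multiplicative (ZMod 2) ≃*
        Equiv.Perm (Fin 7)) := by
  classical
  set g0 : Multiplicative (ZMod 2) := Multiplicative.ofAdd 1 with hg0
  have hZ : ∀ h : Multiplicative (ZMod 2), h = 1 ∨ h = g0 := by decide
  have hg00 : g0 * g0 = 1 := by decide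
  have hg0ne : g0 ≠ 1 := by decide
  obtain ⟨p, hp⟩ := Stmt11Aux.exists_conj (φ g0)
  have hpp : p * p = 1 := by
    apply Stmt11Aux.centralizer_trivial
    intro u hu
    have hu' : u ∈ alternatingGroup (Fin 7) := Equiv.Perm.mem_alternatingGroup.mpr hu
    have h1 : φ g0 (φ g0 ⟨u, hu'⟩) = ⟨u, hu'⟩ := by
      rw [← MulAut.mul_apply, ← map_mul, hg00, map_one, MulAut.one_apply]
    have h2 := congrArg (fun z : alternatingGroup (Fin 7) => (z : Equiv.Perm (Fin 7))) h1
    simp only at h2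
    rw [hp, hp] at h2
    rw [show p * p * u * (p * p)⁻¹ = p * (p * (⟨u, hu'⟩ : alternatingGroup (Fin 7)) * p⁻¹) * p⁻¹
      by group]
    exact h2
  rcases Int.units_eq_one_or (Equiv.Perm.sign p) with hsgn | hsgn
  · -- A₇ × ℤ₂
    left
    have hmem : p ∈ alternatingGroup (Fin 7) := Equiv.Perm.mem_alternatingGroup.mpr hsgn
    have hppA : (⟨p, hmem⟩ : alternatingGroup (Fin 7)) * ⟨p, hmem⟩ = 1 := Subtype.ext hpp
    set f2 : Multiplicative (ZMod 2) →* alternatingGroup (Fin 7) × Multiplicative (ZMod 2) :=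
      MonoidHom.mk' (fun h => ((if h = 1 then 1 else ⟨p, hmem⟩), h)) (by
        intro a b
        rcases hZ a with rfl|rfl <;> rcases hZ b with rfl|rfl <;>
          simp [hg00, hg0ne, hppA, Prod.ext_iff]) with hf2
    have hcompat : ∀ g' : Multiplicative (ZMod 2),
        (MonoidHom.inl (alternatingGroup (Fin 7)) (Multiplicative (ZMod 2))).comp
          (φ g').toMonoidHom
        = (MulAut.conj (f2 g')).toMonoidHom.comp
            (MonoidHom.inl (alternatingGroup (Fin 7)) (Multiplicative (ZMod 2))) := by
      intro g'
      refine MonoidHom.ext fun n => ?_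
      rcases hZ g' with rfl|rfl
      · simp [hf2]
      · simp only [MonoidHom.comp_apply, MonoidHom.inl_apply, MulEquiv.coe_toMonoidHom,
          MulAut.conj_apply, hf2, MonoidHom.mk'_apply, if_neg hg0ne, Prod.mk_mul_mk,
          Prod.inv_mk, mul_one, one_mul]
        rw [Prod.ext_iff]
        refine ⟨?_, ?_⟩
        · simp only
          apply Subtype.ext
          push_cast
          exact hp n
        · simp [hg00]
    set F := SemidirectProduct.lift
      (MonoidHom.inl (alternatingGroup (Fin 7)) (Multiplicative (ZMod 2))) f2 hcompat with hF
    have hFx : ∀ x : (alternatingGroup (Fin 7)) ⋊[φ] Multiplicative (ZMod 2),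
        F x = (x.left * (if x.right = 1 then 1 else ⟨p, hmem⟩), x.right) := by
      intro x
      calc F x = F (inl x.left * inr x.right) := by rw [inl_left_mul_inr_right]
        _ = _ := by
          rw [map_mul, lift_inl, lift_inr, hf2]
          simp [MonoidHom.inl_apply, Prod.ext_iff]
    have hinj : Function.Injective F := by
      rw [injective_iff_map_eq_one]
      intro x hx
      rw [hFx x, show (1 : alternatingGroup (Fin 7) × Multiplicative (ZMod 2)) = (1, 1) from rfl,
        Prod.mk.injEq] at hx
      obtain ⟨hx1, hx2⟩ := hx
      rw [hx2, if_pos rfl, mul_one] at hx1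
      rw [← inl_left_mul_inr_right x, hx1, hx2]
      simp
    have hsurj : Function.Surjective F := by
      rintro ⟨a, h⟩
      rcases hZ h with rfl|rfl
      · exact ⟨inl a, by rw [hFx]; simp⟩
      · refine ⟨inl (a * ⟨p, hmem⟩⁻¹) * inr g0, ?_⟩
        rw [hFx]
        simp only [mul_left, mul_right, left_inl, right_inl, left_inr, right_inr, one_mul,
          mul_one, map_one, if_neg hg0ne]
        rw [Prod.ext_iff]
        constructor
        · simp [mul_assoc]
        · simp
    exact ⟨MulEquiv.ofBijective F ⟨hinj, hsurj⟩⟩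
  · -- S₇
    right
    set f2 : Multiplicative (ZMod 2) →* Equiv.Perm (Fin 7) :=
      MonoidHom.mk' (fun h => if h = 1 then 1 else p) (by
        intro a b
        rcases hZ a with rfl|rfl <;> rcases hZ b with rfl|rfl <;>
          simp [hg00, hg0ne, hpp]) with hf2
    have hcompat : ∀ g' : Multiplicative (ZMod 2),
        (alternatingGroup (Fin 7)).subtype.comp (φ g').toMonoidHom
        = (MulAut.conj (f2 g')).toMonoidHom.comp (alternatingGroup (Fin 7)).subtype := by
      intro g'
      refine MonoidHom.ext fun n => ?_
      rcases hZ g' with rfl|rfl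
      · simp [hf2]
      · simp only [MonoidHom.comp_apply, Subgroup.coe_subtype, MulEquiv.coe_toMonoidHom,
          MulAut.conj_apply, hf2, MonoidHom.mk'_apply, if_neg hg0ne]
        exact hp n
    set F := SemidirectProduct.lift (alternatingGroup (Fin 7)).subtype f2 hcompat with hF
    have hFx : ∀ x : (alternatingGroup (Fin 7)) ⋊[φ] Multiplicative (ZMod 2),
        F x = (x.left : Equiv.Perm (Fin 7)) * (if x.right = 1 then 1 else p) := by
      intro x
      calc F x = F (inl x.left * inr x.right) := by rw [inl_left_mul_inr_right]
        _ = _ := by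
          rw [map_mul, lift_inl, lift_inr, hf2]
          simp
    have hinj : Function.Injective F := by
      rw [injective_iff_map_eq_one]
      intro x hx
      rw [hFx x] at hx
      rcases hZ x.right with hxr|hxr
      · rw [hxr, if_pos rfl, mul_one] at hx
        have hxl : x.left = 1 := Subtype.ext hx
        rw [← inl_left_mul_inr_right x, hxl, hxr]
        simp
      · rw [hxr, if_neg hg0ne] at hx
        exfalso
        have hs := congrArg Equiv.Perm.sign hx
        rw [map_mul, Stmt11Aux.sign_coe, hsgn, map_one] at hs
        exact absurd hs (by decide)
    have hsurj : Function.Surjective F := by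
      intro u
      rcases Int.units_eq_one_or (Equiv.Perm.sign u) with hsu|hsu
      · exact ⟨inl ⟨u, Equiv.Perm.mem_alternatingGroup.mpr hsu⟩, by rw [hFx]; simp⟩
      · have hmem : u * p⁻¹ ∈ alternatingGroup (Fin 7) := by
          rw [Equiv.Perm.mem_alternatingGroup, map_mul, map_inv, hsu, hsgn]
          decide
        refine ⟨inl ⟨u * p⁻¹, hmem⟩ * inr g0, ?_⟩
        rw [hFx]
        simp only [mul_left, mul_right, left_inl, right_inl, left_inr, right_inr, one_mul,
          mul_one, map_one, if_neg hg0ne]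
        simp [mul_assoc]
    exact ⟨MulEquiv.ofBijective F ⟨hinj, hsurj⟩⟩
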